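/- Let ã > 0, b > 0 and suppose x, m, t > 0 with m ≠ 1, m·t ≠ 1, satisfy the three equations x = ã(b t² x² + 1)/(t² x² + b), m x = ã t² (b m² x² + 1)/((t² x² + b) x²)·x², t³ x = ã (b t² x² + 1)/((m² x² + b) x²)·x². Then x = ã·b^{-1}·(m² t − 1)/(t·(m² − m)) and ã²·(m² t − 1)² = b·(m² − m)·(m − t²) and b²·(m² − m)·(1 − t³) = (m − t²)·(m² t − 1). -/

import Mathlib

theorem stmt8 (a b x m t : ℝ)
    (ha : 0 < a) (hb : 0 < b) (hx : 0 < x) (hm : 0 < m) (ht : 0 < t)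
    (hm1 : m ≠ 1) (hmt : m * t ≠ 1)
    (e1 : x = a * (b * t ^ 2 * x ^ 2 + 1) / (t ^ 2 * x ^ 2 + b))
    (e2 : m * x = a * t ^ 2 * (b * m ^ 2 * x ^ 2 + 1) / ((t ^ 2 * x ^ 2 + b) * x ^ 2) * x ^ 2)
    (e3 : t ^ 3 * x = a * (b * t ^ 2 * x ^ 2 + 1) / ((m ^ 2 * x ^ 2 + b) * x ^ 2) * x ^ 2) :
    x = a * b⁻¹ * (m ^ 2 * t - 1) / (t * (m ^ 2 - m)) ∧
    a ^ 2 * (m ^ 2 * t - 1) ^ 2 = b * (m ^ 2 - m) * (m - t ^ 2) ∧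
    b ^ 2 * (m ^ 2 - m) * (1 - t ^ 3) = (m - t ^ 2) * (m ^ 2 * t - 1) := by
  have hx0 : x ≠ 0 := ne_of_gt hx
  have ht0 : t ≠ 0 := ne_of_gt ht
  have hb0 : b ≠ 0 := ne_of_gt hb
  have ha0 : a ≠ 0 := ne_of_gt ha
  have hd1 : t ^ 2 * x ^ 2 + b ≠ 0 := by positivity
  have hd2 : m ^ 2 * x ^ 2 + b ≠ 0 := by positivity
  have hmm : m ^ 2 - m ≠ 0 := by
    have : m * (m - 1) ≠ 0 := mul_ne_zero (ne_of_gt hm) (sub_ne_zero.mpr hm1)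
    intro h; apply this; linarith [h]
  field_simp at e1 e2 e3
  -- e1 : x * (t ^ 2 * x ^ 2 + b) = a * (b * t ^ 2 * x ^ 2 + 1)
  -- e2 : m * x * ((t ^ 2 * x ^ 2 + b) * x ^ 2) = a * t ^ 2 * (b * m ^ 2 * x ^ 2 + 1) * x ^ 2
  -- e3 : t ^ 3 * x * ((m ^ 2 * x ^ 2 + b) * x ^ 2) = a * (b * t ^ 2 * x ^ 2 + 1) * x ^ 2
  have h2 : m * x * (t ^ 2 * x ^ 2 + b) = a * t ^ 2 * (b * m ^ 2 * x ^ 2 + 1) :=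
    mul_right_cancel₀ (pow_ne_zero 2 hx0) (by linear_combination x ^ 2 * e2)
  have hA' : a * (b * t ^ 2 * x ^ 2 * (m ^ 2 - m)) = a * (m - t ^ 2) := by
    linear_combination m * e1 - h2
  have hA : b * t ^ 2 * x ^ 2 * (m ^ 2 - m) = m - t ^ 2 := mul_left_cancel₀ ha0 hA'
  have h3 : t ^ 3 * (m ^ 2 * x ^ 2 + b) * x = (t ^ 2 * x ^ 2 + b) * x :=
    mul_right_cancel₀ (pow_ne_zero 2 hx0) (by linear_combination x ^ 2 * e3 - x ^ 2 * e1)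
  have h3' : t ^ 3 * (m ^ 2 * x ^ 2 + b) = t ^ 2 * x ^ 2 + b :=
    mul_right_cancel₀ hx0 h3
  have hB : t ^ 2 * x ^ 2 * (m ^ 2 * t - 1) = b * (1 - t ^ 3) := by
    linear_combination h3'
  have h1 : x * (b * t * (m ^ 2 - m)) * (t ^ 2 * x ^ 2 + b)
      = a * (m ^ 2 * t - 1) * (t ^ 2 * x ^ 2 + b) := by
    linear_combination (b * t * (m ^ 2 - m)) * e1 + a * b * t * hA - a * hB
  have h1c : x * (b * t * (m ^ 2 - m)) = a * (m ^ 2 * t - 1) :=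
    mul_right_cancel₀ hd1 h1
  refine ⟨?_, ?_, ?_⟩
  · field_simp
    linear_combination h1c
  · linear_combination -(x * b * t * (m ^ 2 - m) + a * (m ^ 2 * t - 1)) * h1c
      + b * (m ^ 2 - m) * hA
  · linear_combination (m ^ 2 * t - 1) * hA - b * (m ^ 2 - m) * hB
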